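/- Let Σ be a Horn theory, c a clause, and α a nonnegative integer. Then σ_α(Σ)_e ⊨ c (the Horn envelope of the α-exterior entails c) if and only if: (i) |OFF(v) ∩ N(c)| ≥ α for all v ∈ char(Σ), and (ii) if S = {v ∈ char(Σ) : |OFF(v) ∩ N(c)| = α} is nonempty, then P(c) ⊄ ⋃_{v∈S} OFF(v), i.e., P(c) is not covered by the OFF-sets of models in S. -/

import Mathlib

/-- Hamming distance between two 0/1 vectors. -/
def Hdist {n : ℕ} (v w : Fin n → Bool) : ℕ :=
  (Finset.univ.filter (fun i => v i ≠ w i)).card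

/-- α-sigmaInt of a model set. -/
def sigmaInt {n : ℕ} (α : ℕ) (M : Set (Fin n → Bool)) : Set (Fin n → Bool) :=
  {v | ∀ w, Hdist v w ≤ α → w ∈ M}

/-- α-sigmaExt of a model set. -/
def sigmaExt {n : ℕ} (α : ℕ) (M : Set (Fin n → Bool)) : Set (Fin n → Bool) :=
  {v | ∃ w ∈ M, Hdist v w ≤ α}

/-- A clause with positive index set `P` and negative index set `N`. -/
structure Clause (n : ℕ) where
  P : Finset (Fin n)
  N : Finset (Fin n)
  disj : Disjoint P N

/-- Satisfaction of a clause by an assignment. -/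
def Clause.sat {n : ℕ} (c : Clause n) (v : Fin n → Bool) : Prop :=
  (∃ i ∈ c.P, v i = true) ∨ (∃ i ∈ c.N, v i = false)

/-- Closure of a set of models under componentwise AND. -/
inductive ClAnd {n : ℕ} (S : Set (Fin n → Bool)) : (Fin n → Bool) → Prop
  | base {v : Fin n → Bool} : v ∈ S → ClAnd S v
  | and {u v : Fin n → Bool} : ClAnd S u → ClAnd S v → ClAnd S (fun i => u i && v i)

/-- Characteristic models of a model set. -/
def charSet {n : ℕ} (M : Set (Fin n → Bool)) : Set (Fin n → Bool) :=
  {v | v ∈ M ∧ ¬ ClAnd (M \ {v}) v}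

/-- The set of coordinates where v is 0. -/
def OFFs {n : ℕ} (v : Fin n → Bool) : Finset (Fin n) :=
  Finset.univ.filter (fun i => v i = false)

theorem inf_true {ι : Type} {s : Finset ι} {f : ι → Bool} (h : ∀ i ∈ s, f i = true) :
    s.inf f = true := (Finset.inf_eq_top_iff f s).2 h

theorem inf_false {ι : Type} {s : Finset ι} {f : ι → Bool} {i : ι} (hi : i ∈ s)
    (h : f i = false) : s.inf f = false := by
  have := Finset.inf_le (f := f) hi
  rw [h] at this
  exact le_bot_iff.1 this

theorem clAnd_factor {n : ℕ} {S : Set (Fin n → Bool)} {b : Fin n → Bool}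
    (h : ClAnd S b) {i : Fin n} (hi : b i = false) :
    ∃ u ∈ S, (∀ j, b j = true → u j = true) ∧ u i = false := by
  induction h with
  | base hv => exact ⟨_, hv, fun j hj => hj, hi⟩
  | and hu hw ihu ihw =>
    simp only [Bool.and_eq_false_iff] at hi
    rcases hi with hi | hi
    · obtain ⟨u', hu', hge, hfi⟩ := ihu hi
      exact ⟨u', hu', fun j hj => hge j (Bool.and_eq_true_iff.1 hj).1, hfi⟩
    · obtain ⟨u', hu', hge, hfi⟩ := ihw hi
      exact ⟨u', hu', fun j hj => hge j (Bool.and_eq_true_iff.1 hj).2, hfi⟩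

theorem clAnd_factor' {n : ℕ} {S : Set (Fin n → Bool)} {b : Fin n → Bool}
    (h : ClAnd S b) : ∃ u ∈ S, ∀ j, b j = true → u j = true := by
  induction h with
  | base hv => exact ⟨_, hv, fun j hj => hj⟩
  | and hu hw ihu ihw =>
    obtain ⟨u', hu', hge⟩ := ihu
    exact ⟨u', hu', fun j hj => hge j (Bool.and_eq_true_iff.1 hj).1⟩

theorem clAnd_top {n : ℕ} {S : Set (Fin n → Bool)} {v : Fin n → Bool}
    (h : ClAnd S v) (hv : ∀ i, v i = true) : v ∈ S := by
  induction h with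
  | base hv' => exact hv'
  | @and u w hu hw ihu ihw =>
    have h1 : ∀ i, u i = true := fun i => (Bool.and_eq_true_iff.1 (hv i)).1
    have h2 : ∀ i, w i = true := fun i => (Bool.and_eq_true_iff.1 (hv i)).2
    have heq : (fun i => u i && w i) = u := funext fun i => by rw [h1 i, h2 i]; rfl
    rw [heq]; exact ihu h1

theorem clAnd_inf {n : ℕ} {ι : Type} {S : Set (Fin n → Bool)} {t : Finset ι}
    (ht : t.Nonempty) (f : ι → Fin n → Bool) (hf : ∀ i ∈ t, ClAnd S (f i)) :
    ClAnd S (fun j => t.inf (fun i => f i j)) := by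
  induction ht using Finset.Nonempty.cons_induction with
  | singleton a => simpa using hf a (by simp)
  | cons a t ha ht ih =>
    have h1 : ClAnd S (f a) := hf a (by simp)
    have h2 := ih (fun i hi => hf i (Finset.mem_cons_of_mem hi))
    have h3 := ClAnd.and h1 h2
    convert h3 using 1
    funext j
    simp [Finset.inf_cons]

def ones {n : ℕ} (v : Fin n → Bool) : ℕ := (Finset.univ.filter (fun i => v i = true)).card

theorem ones_le {n : ℕ} (v : Fin n → Bool) : ones v ≤ n := by
  simpa [ones] using (Finset.card_filter_le Finset.univ (fun i => v i = true))

theorem ones_lt {n : ℕ} {v u : Fin n → Bool} (hge : ∀ j, v j = true → u j = true)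
    (hne : u ≠ v) : ones v < ones u := by
  apply Finset.card_lt_card
  constructor
  · intro i hi
    simp only [Finset.mem_filter, Finset.mem_univ, true_and] at hi ⊢
    exact hge i hi
  · intro hsub
    apply hne
    funext i
    by_cases hv : v i = true
    · rw [hv, hge i hv]
    · have hvf : v i = false := by simpa using hv
      by_cases hu : u i = true
      · have := hsub (by simpa using hu)
        simp only [Finset.mem_filter, Finset.mem_univ, true_and] at this
        rw [this] at hvf; exact absurd hvf (by simp)
      · simp only [Bool.not_eq_true] at hu
        rw [hu, hvf]

theorem mem_clAnd_char {n : ℕ} {M : Set (Fin n → Bool)} :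
    ∀ v ∈ M, ClAnd (charSet M) v := by
  suffices h : ∀ k, ∀ v ∈ M, n - ones v ≤ k → ClAnd (charSet M) v by
    intro v hv; exact h n v hv (Nat.sub_le _ _)
  intro k
  induction k with
  | zero =>
    intro v hv hk
    have hone : ones v = n := le_antisymm (ones_le v) (by omega)
    have hall : ∀ i, v i = true := by
      by_contra hc
      push_neg at hc
      obtain ⟨i, hi⟩ := hc
      have : (Finset.univ.filter (fun i => v i = true)) ⊂ Finset.univ := by
        refine Finset.filter_ssubset.2 ⟨i, Finset.mem_univ i, hi⟩
      have := Finset.card_lt_card this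
      simp only [Finset.card_univ, Fintype.card_fin] at this
      simp only [ones] at hone
      omega
    by_cases hch : ClAnd (M \ {v}) v
    · have := clAnd_top hch hall
      exact absurd rfl this.2
    · exact ClAnd.base ⟨hv, hch⟩
  | succ k ih =>
    intro v hv hk
    by_cases hch : ClAnd (M \ {v}) v
    · rcases Finset.eq_empty_or_nonempty (OFFs v) with hOFF | hOFF
      · have hall : ∀ i, v i = true := by
          intro i
          by_contra hc
          have : i ∈ OFFs v := by
            simp only [OFFs, Finset.mem_filter, Finset.mem_univ, true_and]
            simpa using hc
          rw [hOFF] at this; exact absurd this (Finset.notMem_empty i)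
        have := clAnd_top hch hall
        exact absurd rfl this.2
      · have hex : ∀ i : Fin n, ∃ u,
            i ∈ OFFs v → (u ∈ M \ {v} ∧ (∀ j, v j = true → u j = true) ∧ u i = false) := by
          intro i
          by_cases hi : i ∈ OFFs v
          · have hif : v i = false := by
              simpa [OFFs] using hi
            obtain ⟨u, hu, hge, hfi⟩ := clAnd_factor hch hif
            exact ⟨u, fun _ => ⟨hu, hge, hfi⟩⟩
          · exact ⟨v, fun h => absurd h hi⟩
        choose f hf using hex
        have hfc : ∀ i ∈ OFFs v, ClAnd (charSet M) (f i) := by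
          intro i hi
          obtain ⟨⟨hM, hne⟩, hge, hfi⟩ := hf i hi
          have hne' : f i ≠ v := by simpa using hne
          have hlt := ones_lt hge hne'
          have := ones_le (f i)
          exact ih (f i) hM (by omega)
        have heq : v = fun j => (OFFs v).inf (fun i => f i j) := by
          funext j
          cases hvj : v j with
          | false =>
            have hj : j ∈ OFFs v := by simp [OFFs, hvj]
            exact (inf_false (f := fun i => f i j) hj (hf j hj).2.2).symm
          | true =>
            exact (inf_true (fun i hi => (hf i hi).2.1 j hvj)).symm
        rw [heq]
        exact clAnd_inf hOFF f hfc
    · exact ClAnd.base ⟨hv, hch⟩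

/-- Flip the coordinates in `s` of `v` up to `true`. -/
def flipUp {n : ℕ} (s : Finset (Fin n)) (v : Fin n → Bool) : Fin n → Bool :=
  fun i => if i ∈ s then true else v i

theorem hdist_flipUp {n : ℕ} (s : Finset (Fin n)) (v : Fin n → Bool) :
    Hdist (flipUp s v) v ≤ (OFFs v ∩ s).card := by
  apply Finset.card_le_card
  intro i hi
  rw [Finset.mem_filter] at hi
  replace hi := hi.2
  simp only [flipUp] at hi
  simp only [OFFs, Finset.mem_inter, Finset.mem_filter, Finset.mem_univ, true_and]
  by_cases his : i ∈ s
  · rw [if_pos his] at hi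
    exact ⟨by simpa using (Ne.symm hi), his⟩
  · rw [if_neg his] at hi
    exact absurd rfl hi

theorem flipUp_mem_sigmaExt {n α : ℕ} {M : Set (Fin n → Bool)} {v : Fin n → Bool}
    (hv : v ∈ M) {s : Finset (Fin n)} (h : (OFFs v ∩ s).card ≤ α) :
    flipUp s v ∈ sigmaExt α M :=
  ⟨v, hv, le_trans (hdist_flipUp s v) h⟩

/-- If there is a "base" vector in the exterior with all of `N` true, and for each
`j ∈ P` such a vector that is moreover false at `j`, then the AND-closure of the
exterior contains a vector violating the clause. -/
theorem exists_bad {n α : ℕ} {M : Set (Fin n → Bool)} (c : Clause n)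
    (h0 : ∃ u ∈ sigmaExt α M, ∀ i ∈ c.N, u i = true)
    (hP : ∀ j ∈ c.P, ∃ u ∈ sigmaExt α M, (∀ i ∈ c.N, u i = true) ∧ u j = false) :
    ∃ b, ClAnd (sigmaExt α M) b ∧ (∀ i ∈ c.P, b i = false) ∧ (∀ i ∈ c.N, b i = true) := by
  obtain ⟨u0, hu0, hu0N⟩ := h0
  rcases Finset.eq_empty_or_nonempty c.P with hPe | hPne
  · exact ⟨u0, ClAnd.base hu0, fun i hi => by rw [hPe] at hi; exact absurd hi (by simp),
      hu0N⟩
  · have hex : ∀ j : Fin n, ∃ u, u ∈ sigmaExt α M ∧ (∀ i ∈ c.N, u i = true) ∧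
        (j ∈ c.P → u j = false) := by
      intro j
      by_cases hj : j ∈ c.P
      · obtain ⟨u, hu, huN, huj⟩ := hP j hj
        exact ⟨u, hu, huN, fun _ => huj⟩
      · exact ⟨u0, hu0, hu0N, fun h => absurd h hj⟩
    choose f hf using hex
    refine ⟨fun i => c.P.inf (fun j => f j i), clAnd_inf hPne f (fun j _ => ClAnd.base (hf j).1),
      ?_, ?_⟩
    · intro i hi
      exact inf_false (f := fun j => f j i) hi ((hf i).2.2 hi)
    · intro i hi
      exact inf_true (fun j _ => (hf j).2.1 i hi)

theorem stmt15 {n : ℕ} (α : ℕ) (M : Set (Fin n → Bool))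
    (hcl : ∀ u ∈ M, ∀ w ∈ M, (fun i => u i && w i) ∈ M) (c : Clause n) :
    (∀ w, ClAnd (sigmaExt α M) w → c.sat w) ↔
    ((∀ v ∈ charSet M, α ≤ (OFFs v ∩ c.N).card) ∧
      ((∃ v ∈ charSet M, (OFFs v ∩ c.N).card = α) →
        ¬ ∀ j ∈ c.P, ∃ v ∈ charSet M,
            (OFFs v ∩ c.N).card = α ∧ j ∈ OFFs v)) := by
  have hPN : ∀ j ∈ c.P, j ∉ c.N := fun j hj => Finset.disjoint_left.1 c.disj hj
  have offsub : ∀ (v v' : Fin n → Bool), (∀ j, v j = true → v' j = true) →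
      OFFs v' ∩ c.N ⊆ OFFs v ∩ c.N := by
    intro v v' hge i hi
    simp only [OFFs, Finset.mem_inter, Finset.mem_filter, Finset.mem_univ, true_and] at hi ⊢
    refine ⟨?_, hi.2⟩
    cases hvi : v i with
    | false => rfl
    | true => rw [hge i hvi] at hi; exact absurd hi.1 (by simp)
  constructor
  · -- LHS → RHS
    intro hL
    by_contra hR
    by_cases hA : ∀ v ∈ charSet M, α ≤ (OFFs v ∩ c.N).card
    · have h2 : ¬((∃ v ∈ charSet M, (OFFs v ∩ c.N).card = α) →
          ¬ ∀ j ∈ c.P, ∃ v ∈ charSet M, (OFFs v ∩ c.N).card = α ∧ j ∈ OFFs v) :=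
        fun h => hR ⟨hA, h⟩
      push_neg at h2
      obtain ⟨⟨v0, hv0c, hv0⟩, hF⟩ := h2
      obtain ⟨b, hb, hbP, hbN⟩ := exists_bad c
        ⟨flipUp c.N v0, flipUp_mem_sigmaExt hv0c.1 (le_of_eq hv0),
          fun i hi => by simp [flipUp, hi]⟩
        (by
          intro j hj
          obtain ⟨v, hvc, hvcard, hvj⟩ := hF j hj
          have hvjf : v j = false := by simpa [OFFs] using hvj
          refine ⟨flipUp c.N v, flipUp_mem_sigmaExt hvc.1 (le_of_eq hvcard),
            fun i hi => by simp [flipUp, hi], ?_⟩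
          simp [flipUp, hPN j hj, hvjf])
      have := hL b hb
      rcases this with ⟨i, hi, hit⟩ | ⟨i, hi, hif⟩
      · rw [hbP i hi] at hit; exact absurd hit (by simp)
      · rw [hbN i hi] at hif; exact absurd hif (by simp)
    · push_neg at hA
      obtain ⟨v, hvc, hvlt⟩ := hA
      obtain ⟨b, hb, hbP, hbN⟩ := exists_bad c
        ⟨flipUp c.N v, flipUp_mem_sigmaExt hvc.1 (le_of_lt hvlt),
          fun i hi => by simp [flipUp, hi]⟩
        (by
          intro j hj
          refine ⟨fun i => if i = j then false else flipUp c.N v i, ⟨v, hvc.1, ?_⟩,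
            fun i hi => ?_, by simp⟩
          · calc Hdist (fun i => if i = j then false else flipUp c.N v i) v
                ≤ (insert j (OFFs v ∩ c.N)).card := by
                  apply Finset.card_le_card
                  intro i hi
                  simp only [Hdist, Finset.mem_filter, Finset.mem_univ, true_and] at hi
                  simp only [Finset.mem_insert]
                  by_cases hij : i = j
                  · exact Or.inl hij
                  · rw [if_neg hij] at hi
                    right
                    simp only [OFFs, Finset.mem_inter, Finset.mem_filter,
                      Finset.mem_univ, true_and]
                    simp only [flipUp] at hi
                    by_cases his : i ∈ c.N
                    · rw [if_pos his] at hi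
                      exact ⟨by simpa using (Ne.symm hi), his⟩
                    · rw [if_neg his] at hi
                      exact absurd rfl hi
              _ ≤ (OFFs v ∩ c.N).card + 1 := Finset.card_insert_le _ _
              _ ≤ α := by omega
          · have hij : i ≠ j := fun h => hPN j hj (h ▸ hi)
            simp [flipUp, hij, hi])
      have := hL b hb
      rcases this with ⟨i, hi, hit⟩ | ⟨i, hi, hif⟩
      · rw [hbP i hi] at hit; exact absurd hit (by simp)
      · rw [hbN i hi] at hif; exact absurd hif (by simp)
  · -- RHS → LHS
    rintro ⟨hA, hEF⟩ w hw
    by_contra hs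
    rw [Clause.sat] at hs
    push_neg at hs
    obtain ⟨hsP, hsN⟩ := hs
    have hsP' : ∀ i ∈ c.P, w i = false := fun i hi => by simpa using hsP i hi
    have hsN' : ∀ i ∈ c.N, w i = true := fun i hi => by simpa using hsN i hi
    have step : ∀ u, u ∈ sigmaExt α M → (∀ i ∈ c.N, u i = true) →
        ∃ v ∈ M, (OFFs v ∩ c.N) ⊆ Finset.univ.filter (fun i => u i ≠ v i) ∧
          Hdist u v ≤ α := by
      intro u hu huN
      obtain ⟨v, hvM, hd⟩ := hu
      refine ⟨v, hvM, ?_, hd⟩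
      intro i hi
      simp only [OFFs, Finset.mem_inter, Finset.mem_filter, Finset.mem_univ, true_and] at hi ⊢
      rw [huN i hi.2, hi.1]
      simp
    have hE : ∃ v ∈ charSet M, (OFFs v ∩ c.N).card = α := by
      obtain ⟨u, hu, hge⟩ := clAnd_factor' hw
      have huN : ∀ i ∈ c.N, u i = true := fun i hi => hge i (hsN' i hi)
      obtain ⟨v, hvM, hsub, hd⟩ := step u hu huN
      have hcard : (OFFs v ∩ c.N).card ≤ α := le_trans (Finset.card_le_card hsub) hd
      obtain ⟨v', hv'c, hv'ge⟩ := clAnd_factor' (mem_clAnd_char v hvM)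
      have hle := Finset.card_le_card (offsub v v' hv'ge)
      exact ⟨v', hv'c, le_antisymm (le_trans hle hcard) (hA v' hv'c)⟩
    have hF : ∀ j ∈ c.P, ∃ v ∈ charSet M, (OFFs v ∩ c.N).card = α ∧ j ∈ OFFs v := by
      intro j hj
      obtain ⟨u, hu, hge, huj⟩ := clAnd_factor hw (hsP' j hj)
      have huN : ∀ i ∈ c.N, u i = true := fun i hi => hge i (hsN' i hi)
      obtain ⟨v, hvM, hsub, hd⟩ := step u hu huN
      cases hvj : v j with
      | true =>
        exfalso
        have hjmem : j ∈ Finset.univ.filter (fun i => u i ≠ v i) := by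
          simp only [Finset.mem_filter, Finset.mem_univ, true_and]
          rw [huj, hvj]; simp
        have hjnot : j ∉ OFFs v ∩ c.N := by
          simp [OFFs, Finset.mem_inter, hvj]
        have hins : insert j (OFFs v ∩ c.N) ⊆ Finset.univ.filter (fun i => u i ≠ v i) := by
          intro i hi
          rcases Finset.mem_insert.1 hi with h | h
          · exact h ▸ hjmem
          · exact hsub h
        have hcard : (OFFs v ∩ c.N).card + 1 ≤ α := by
          have := Finset.card_le_card hins
          rw [Hdist] at hd
          rw [Finset.card_insert_of_notMem hjnot] at this
          omega
        obtain ⟨v', hv'c, hv'ge⟩ := clAnd_factor' (mem_clAnd_char v hvM)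
        have hle := Finset.card_le_card (offsub v v' hv'ge)
        have := hA v' hv'c
        omega
      | false =>
        have hcard : (OFFs v ∩ c.N).card ≤ α := le_trans (Finset.card_le_card hsub) hd
        obtain ⟨v', hv'c, hv'ge, hv'j⟩ := clAnd_factor (mem_clAnd_char v hvM) hvj
        have hle := Finset.card_le_card (offsub v v' hv'ge)
        refine ⟨v', hv'c, le_antisymm (le_trans hle hcard) (hA v' hv'c), ?_⟩
        simp [OFFs, hv'j]
    exact hEF hE hF
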